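/- Let Γ be a Polish group acting continuously on a Polish space X. Then the set X_C = {x ∈ X : the orbit Γ·x is countable} is Borel, and the restriction of the orbit equivalence relation to X_C is Borel. -/

import Mathlib

open MeasureTheory

open Set MulAction TopologicalSpace in
private lemma stmt10_aux1 {G X : Type*} [TopologicalSpace G] [Group G] [IsTopologicalGroup G]
    [PolishSpace G] [TopologicalSpace X] [PolishSpace X]
    [MulAction G X] [ContinuousSMul G X] (x : X) (h : (orbit G x).Countable) :
    IsOpen (stabilizer G x : Set G) := by
  haveI : BaireSpace G := by letI := upgradeIsCompletelyMetrizable G; infer_instance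
  haveI : Nonempty G := ⟨1⟩
  haveI := h.to_subtype
  have hclosed : ∀ y : orbit G x, IsClosed {g : G | g • x = (y : X)} := fun y =>
    isClosed_eq (continuous_id.smul continuous_const) continuous_const
  have hcover : ⋃ y : orbit G x, {g : G | g • x = (y : X)} = univ := by
    ext g
    simp only [mem_iUnion, mem_setOf_eq, mem_univ, iff_true]
    exact ⟨⟨g • x, mem_orbit _ _⟩, rfl⟩
  obtain ⟨y, h0, h0mem⟩ := nonempty_interior_of_iUnion_of_closed hclosed hcover
  have h0x : h0 • x = (y : X) := by have := interior_subset h0mem; exact this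
  apply Subgroup.isOpen_of_one_mem_interior
  have heq : (stabilizer G x : Set G) =
      (Homeomorph.mulLeft h0) ⁻¹' {g : G | g • x = (y : X)} := by
    ext g
    simp only [SetLike.mem_coe, MulAction.mem_stabilizer_iff, mem_preimage,
      Homeomorph.coe_mulLeft, mem_setOf_eq, mul_smul, ← h0x, smul_left_cancel_iff]
  rw [heq, ← Homeomorph.preimage_interior]
  simpa using h0mem

open Set MulAction TopologicalSpace in
private lemma stmt10_aux2 {G X : Type*} [TopologicalSpace G] [Group G] [IsTopologicalGroup G]
    [PolishSpace G] [TopologicalSpace X] [PolishSpace X]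
    [MulAction G X] [ContinuousSMul G X] (x : X) (hs : IsOpen (stabilizer G x : Set G))
    {u : ℕ → G} (hu : DenseRange u) (g : G) : ∃ n, u n • x = g • x := by
  have hopen : IsOpen ((g * ·) '' (stabilizer G x : Set G)) :=
    (Homeomorph.mulLeft g).isOpenMap _ hs
  obtain ⟨n, hn⟩ := hu.exists_mem_open hopen ⟨g, 1, one_mem _, mul_one g⟩
  obtain ⟨s, hsmem, hseq⟩ := hn
  refine ⟨n, ?_⟩
  rw [← hseq, mul_smul, MulAction.mem_stabilizer_iff.1 hsmem]

/-- For a continuous action of a Polish group `Γ` on a Polish space `X`, the set of points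
with countable orbit is Borel, and the restriction of the orbit equivalence relation to
this set is Borel. -/
theorem stmt10 {G X : Type*} [TopologicalSpace G] [Group G] [IsTopologicalGroup G]
    [PolishSpace G] [TopologicalSpace X] [PolishSpace X]
    [MeasurableSpace X] [BorelSpace X]
    [MulAction G X] [ContinuousSMul G X] :
    MeasurableSet {x : X | (MulAction.orbit G x).Countable} ∧
    MeasurableSet {p : X × X | (MulAction.orbit G p.1).Countable ∧
      (MulAction.orbit G p.2).Countable ∧ p.2 ∈ MulAction.orbit G p.1} := by
  open Set MulAction TopologicalSpace in
  set u : ℕ → G := TopologicalSpace.denseSeq G with hu_def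
  have hu : DenseRange u := TopologicalSpace.denseRange_denseSeq G
  have key : ∀ x : X, (orbit G x).Countable ↔
      ∃ t ∈ countableBasis G, (1 : G) ∈ t ∧ ∀ n, u n ∈ t → u n • x = x := by
    intro x
    constructor
    · intro h
      have hop := stmt10_aux1 x h
      obtain ⟨t, ht, h1t, hts⟩ :=
        (isBasis_countableBasis G).exists_subset_of_mem_open
          (show (1 : G) ∈ (stabilizer G x : Set G) from one_mem _) hop
      exact ⟨t, ht, h1t, fun n hn => MulAction.mem_stabilizer_iff.1 (hts hn)⟩
    · rintro ⟨t, ht, h1t, hfix⟩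
      have htop : IsOpen t := isOpen_of_mem_countableBasis ht
      have hstabclosed : IsClosed (stabilizer G x : Set G) :=
        isClosed_eq (continuous_id.smul continuous_const) continuous_const
      have hsub : t ⊆ (stabilizer G x : Set G) := by
        have h1 : t ⊆ closure (t ∩ range u) := Dense.open_subset_closure_inter hu htop
        have h2 : closure (t ∩ range u) ⊆ (stabilizer G x : Set G) := by
          rw [← hstabclosed.closure_eq]
          apply closure_mono
          rintro y ⟨hyt, n, rfl⟩
          exact MulAction.mem_stabilizer_iff.2 (hfix n hyt)
        exact fun g hg => h2 (h1 hg)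
      have hop : IsOpen (stabilizer G x : Set G) :=
        Subgroup.isOpen_of_mem_nhds _ (Filter.mem_of_superset (htop.mem_nhds h1t) hsub)
      have horb : orbit G x ⊆ range (fun n => u n • x) := by
        rintro y ⟨g, rfl⟩
        obtain ⟨n, hn⟩ := stmt10_aux2 x hop hu g
        exact ⟨n, hn⟩
      exact (countable_range _).mono horb
  have hfixmeas : ∀ n : ℕ, MeasurableSet {x : X | u n • x = x} := fun n =>
    (isClosed_eq (continuous_const.smul continuous_id) continuous_id).measurableSet
  haveI : Countable (countableBasis G) := (countable_countableBasis G).to_subtype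
  have hS : MeasurableSet {x : X | (orbit G x).Countable} := by
    have heq : {x : X | (orbit G x).Countable} =
        ⋃ t : countableBasis G, ⋃ (_ : (1 : G) ∈ (t : Set G)),
          ⋂ n, ⋂ (_ : u n ∈ (t : Set G)), {x : X | u n • x = x} := by
      ext x
      simp only [mem_setOf_eq, key x, mem_iUnion, mem_iInter, Subtype.exists, exists_prop]
    rw [heq]
    exact MeasurableSet.iUnion fun t => MeasurableSet.iUnion fun _ =>
      MeasurableSet.iInter fun n => MeasurableSet.iInter fun _ => hfixmeas n
  refine ⟨hS, ?_⟩
  have heq2 : {p : X × X | (orbit G p.1).Countable ∧ (orbit G p.2).Countable ∧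
      p.2 ∈ orbit G p.1} =
      (Prod.fst ⁻¹' {x : X | (orbit G x).Countable}) ∩
      (Prod.snd ⁻¹' {x : X | (orbit G x).Countable}) ∩
      ⋃ n, {p : X × X | u n • p.1 = p.2} := by
    ext ⟨x, y⟩
    simp only [mem_setOf_eq, mem_inter_iff, mem_preimage, mem_iUnion]
    constructor
    · rintro ⟨h1, h2, g, rfl⟩
      refine ⟨⟨h1, h2⟩, ?_⟩
      obtain ⟨n, hn⟩ := stmt10_aux2 x (stmt10_aux1 x h1) hu g
      exact ⟨n, hn⟩
    · rintro ⟨⟨h1, h2⟩, n, hn⟩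
      exact ⟨h1, h2, ⟨u n, hn⟩⟩
  rw [heq2]
  exact ((hS.preimage measurable_fst).inter (hS.preimage measurable_snd)).inter
    (MeasurableSet.iUnion fun n =>
      (isClosed_eq (continuous_const.smul continuous_fst) continuous_snd).measurableSet)
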